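/- Let d ∈ ℝ and C, R > 0, and let (a_ℓ)_{ℓ∈ℕ} be a sequence of functions a_ℓ : [1, ∞) → ℂ with |a_ℓ(r)| ≤ C · R^ℓ · ℓ! · r^{d − ℓ} for all ℓ ∈ ℕ and r ≥ 1. Let c be a real number with 0 < c ≤ 1/(4R), and define A(r) = Σ_{ℓ=0}^{⌊cr⌋} a_ℓ(r) for r ≥ 1. Then there exist C' > 0 and R' > 0 (depending only on C, R, c, d) such that for every natural number N and every r ≥ 1: |A(r) − Σ_{ℓ=0}^{N−1} a_ℓ(r)| ≤ C' · (R')^N · N! · r^{d − N}. -/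

import Mathlib

private lemma fact_le_pow_aux (N j : ℕ) :
    ((N + j).factorial : ℕ) ≤ N.factorial * (N + j) ^ j := by
  induction j with
  | zero => simp
  | succ j ih =>
      have h1 : (N + (j+1)).factorial = (N + j + 1) * (N + j).factorial := by
        rw [show N + (j+1) = (N + j) + 1 by ring, Nat.factorial_succ]
      rw [h1]
      calc (N + j + 1) * (N + j).factorial
          ≤ (N + j + 1) * (N.factorial * (N + j) ^ j) :=
            Nat.mul_le_mul_left _ ih
        _ ≤ (N + (j+1)) * (N.factorial * (N + (j+1)) ^ j) := by
            apply Nat.mul_le_mul (by omega)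
            exact Nat.mul_le_mul_left _ (Nat.pow_le_pow_left (by omega) j)
        _ = N.factorial * (N + (j+1)) ^ (j+1) := by ring

private lemma fact_mul_pow_le (ℓ N : ℕ) (h : ℓ ≤ N) :
    ℓ.factorial * ℓ ^ (N - ℓ) ≤ N.factorial := by
  calc ℓ.factorial * ℓ ^ (N - ℓ)
      ≤ ℓ.factorial * (ℓ + 1) ^ (N - ℓ) :=
        Nat.mul_le_mul_left _ (Nat.pow_le_pow_left (by omega) _)
    _ ≤ (ℓ + (N - ℓ)).factorial := Nat.factorial_mul_pow_le_factorial
    _ = N.factorial := by rw [Nat.add_sub_cancel' h]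

private lemma geom_quarter_le (k : ℕ) : ∑ i ∈ Finset.range k, (1/4 : ℝ) ^ i ≤ 2 := by
  have h := geom_sum_eq (by norm_num : (1/4 : ℝ) ≠ 1) k
  have h2 : (0:ℝ) ≤ (1/4 : ℝ) ^ k := by positivity
  rw [h]
  rw [div_le_iff_of_neg (by norm_num : (1/4 : ℝ) - 1 < 0)]
  nlinarith

/-- **Borel summation of a formal analytic amplitude by lowest-term truncation**: if
`|a_ℓ(r)| ≤ C R^ℓ ℓ! r^{d−ℓ}` and `0 < c ≤ 1/(4R)`, then `A(r) = Σ_{ℓ≤⌊cr⌋} a_ℓ(r)`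
realises the formal amplitude `(a_ℓ)`, i.e. for some `C', R' > 0` one has
`|A(r) − Σ_{ℓ<N} a_ℓ(r)| ≤ C' R'^N N! r^{d−N}` for every `N` and `r ≥ 1`. -/
theorem stmt_7 (d C R : ℝ) (hC : 0 < C) (hR : 0 < R)
    (a : ℕ → ℝ → ℂ)
    (ha : ∀ (ℓ : ℕ) (r : ℝ), 1 ≤ r →
      ‖a ℓ r‖ ≤ C * R ^ ℓ * (ℓ.factorial : ℝ) * r ^ (d - (ℓ : ℝ)))
    (c : ℝ) (hc : 0 < c) (hcR : c ≤ 1 / (4 * R))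
    (A : ℝ → ℂ)
    (hA : ∀ r : ℝ, 1 ≤ r → A r = ∑ ℓ ∈ Finset.range (⌊c * r⌋₊ + 1), a ℓ r) :
    ∃ C' : ℝ, 0 < C' ∧ ∃ R' : ℝ, 0 < R' ∧
      ∀ (N : ℕ) (r : ℝ), 1 ≤ r →
        ‖A r - ∑ ℓ ∈ Finset.range N, a ℓ r‖
          ≤ C' * R' ^ N * (N.factorial : ℝ) * r ^ (d - (N : ℝ)) := by
  have hRc : R * c ≤ 1 / 4 := by
    have h4R : (0:ℝ) < 4 * R := by linarith
    have := (le_div_iff₀ h4R).mp hcR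
    nlinarith
  have hRc1 : R ≤ 1 / c := by
    rw [le_div_iff₀ hc]; linarith
  refine ⟨2 * C, by linarith, max R (2 / c), lt_of_lt_of_le hR (le_max_left _ _), ?_⟩
  intro N r hr
  have hr0 : (0:ℝ) < r := lt_of_lt_of_le one_pos hr
  set R' : ℝ := max R (2 / c) with hR'def
  have hRR' : R ≤ R' := le_max_left _ _
  have h2cR' : 2 / c ≤ R' := le_max_right _ _
  set M : ℕ := ⌊c * r⌋₊ + 1 with hM
  rw [hA r hr]
  have hrpowpos : (0:ℝ) < r ^ (d - (N:ℝ)) := Real.rpow_pos_of_pos hr0 _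
  rcases le_or_gt N M with hNM | hMN
  · -- N ≤ M : tail sum with geometric decay
    rw [← Finset.sum_Ico_eq_sub _ hNM]
    have hterm : ∀ ℓ ∈ Finset.Ico N M,
        ‖a ℓ r‖ ≤ (1/4 : ℝ) ^ (ℓ - N) * (C * R ^ N * (N.factorial : ℝ) * r ^ (d - (N:ℝ))) := by
      intro ℓ hℓ
      rw [Finset.mem_Ico] at hℓ
      obtain ⟨hNℓ, hℓM⟩ := hℓ
      obtain ⟨j, rfl⟩ : ∃ j, ℓ = N + j := ⟨ℓ - N, by omega⟩
      have hjeq : N + j - N = j := by omega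
      rw [hjeq]
      have hcr : ((N + j : ℕ) : ℝ) ≤ c * r := by
        have h1 : N + j ≤ ⌊c * r⌋₊ := by omega
        calc ((N + j : ℕ) : ℝ) ≤ (⌊c * r⌋₊ : ℝ) := Nat.cast_le.mpr h1
          _ ≤ c * r := Nat.floor_le (by positivity)
      have hrpow : r ^ (d - ((N + j : ℕ) : ℝ)) = r ^ (d - (N:ℝ)) / r ^ j := by
        rw [← Real.rpow_natCast r j, ← Real.rpow_sub hr0]
        congr 1
        push_cast
        ring
      have h1 : ((N + j).factorial : ℝ) ≤ (N.factorial : ℝ) * ((N:ℝ) + j) ^ j := by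
        exact_mod_cast fact_le_pow_aux N j
      have h2 : (R * ((N:ℝ) + j)) ^ j ≤ (r / 4) ^ j := by
        apply pow_le_pow_left₀ (by positivity)
        have : R * ((N:ℝ) + j) ≤ R * (c * r) := by
          apply mul_le_mul_of_nonneg_left _ hR.le
          exact_mod_cast hcr
        nlinarith
      calc ‖a (N + j) r‖
          ≤ C * R ^ (N + j) * ((N + j).factorial : ℝ) * r ^ (d - ((N + j : ℕ) : ℝ)) :=
            ha (N + j) r hr
        _ = (C * R ^ N * r ^ (d - (N:ℝ))) * ((R ^ j * ((N + j).factorial : ℝ)) / r ^ j) := by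
            rw [hrpow, pow_add]; ring
        _ ≤ (C * R ^ N * r ^ (d - (N:ℝ))) * (((N.factorial : ℝ) * (r / 4) ^ j) / r ^ j) := by
            apply mul_le_mul_of_nonneg_left _ (by positivity)
            apply div_le_div_of_nonneg_right _ (pow_pos hr0 j).le
            calc R ^ j * ((N + j).factorial : ℝ)
                ≤ R ^ j * ((N.factorial : ℝ) * ((N:ℝ) + j) ^ j) := by
                  apply mul_le_mul_of_nonneg_left h1 (by positivity)
              _ = (N.factorial : ℝ) * (R * ((N:ℝ) + j)) ^ j := by
                  rw [mul_pow]; ring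
              _ ≤ (N.factorial : ℝ) * (r / 4) ^ j := by
                  apply mul_le_mul_of_nonneg_left h2 (by positivity)
        _ = (1/4 : ℝ) ^ j * (C * R ^ N * (N.factorial : ℝ) * r ^ (d - (N:ℝ))) := by
            rw [div_pow, div_pow]
            field_simp
            ring
    calc ‖∑ ℓ ∈ Finset.Ico N M, a ℓ r‖
        ≤ ∑ ℓ ∈ Finset.Ico N M, ‖a ℓ r‖ := norm_sum_le _ _
      _ ≤ ∑ ℓ ∈ Finset.Ico N M,
            (1/4 : ℝ) ^ (ℓ - N) * (C * R ^ N * (N.factorial : ℝ) * r ^ (d - (N:ℝ))) :=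
          Finset.sum_le_sum hterm
      _ = (∑ ℓ ∈ Finset.Ico N M, (1/4 : ℝ) ^ (ℓ - N)) *
            (C * R ^ N * (N.factorial : ℝ) * r ^ (d - (N:ℝ))) := by
          rw [Finset.sum_mul]
      _ ≤ 2 * (C * R ^ N * (N.factorial : ℝ) * r ^ (d - (N:ℝ))) := by
          apply mul_le_mul_of_nonneg_right _ (by positivity)
          rw [Finset.sum_Ico_eq_sum_range]
          simp only [Nat.add_sub_cancel_left]
          exact geom_quarter_le _
      _ = 2 * C * R ^ N * (N.factorial : ℝ) * r ^ (d - (N:ℝ)) := by ring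
      _ ≤ 2 * C * R' ^ N * (N.factorial : ℝ) * r ^ (d - (N:ℝ)) := by gcongr
  · -- M < N : finitely many extra terms, each tiny
    rw [← neg_sub, norm_neg, ← Finset.sum_Ico_eq_sub _ hMN.le]
    have hterm : ∀ ℓ ∈ Finset.Ico M N,
        ‖a ℓ r‖ ≤ C * (1/c : ℝ) ^ N * (N.factorial : ℝ) * r ^ (d - (N:ℝ)) := by
      intro ℓ hℓ
      rw [Finset.mem_Ico] at hℓ
      obtain ⟨hMℓ, hℓN⟩ := hℓ
      have hℓN' : ℓ ≤ N := hℓN.le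
      set k : ℕ := N - ℓ with hk
      have hcrℓ : c * r < (ℓ : ℝ) := by
        calc c * r < (⌊c * r⌋₊ : ℝ) + 1 := Nat.lt_floor_add_one _
          _ ≤ (ℓ : ℝ) := by exact_mod_cast Nat.cast_le.mpr hMℓ
      have hrℓ : r ≤ (ℓ : ℝ) / c := by
        rw [le_div_iff₀ hc]; nlinarith
      have hrpow : r ^ (d - (ℓ:ℝ)) = r ^ (d - (N:ℝ)) * r ^ k := by
        rw [← Real.rpow_natCast r k, ← Real.rpow_add hr0]
        congr 1
        rw [hk, Nat.cast_sub hℓN']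
        ring
      have key : R ^ ℓ * (ℓ.factorial : ℝ) * r ^ k ≤ (1/c : ℝ) ^ N * (N.factorial : ℝ) := by
        have h1 : r ^ k ≤ ((ℓ:ℝ) / c) ^ k := pow_le_pow_left₀ hr0.le hrℓ k
        have h2 : R ^ ℓ ≤ (1/c : ℝ) ^ ℓ := pow_le_pow_left₀ hR.le hRc1 ℓ
        have h3 : (ℓ.factorial : ℝ) * (ℓ:ℝ) ^ k ≤ (N.factorial : ℝ) := by
          have := fact_mul_pow_le ℓ N hℓN'
          exact_mod_cast this
        calc R ^ ℓ * (ℓ.factorial : ℝ) * r ^ k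
            ≤ (1/c : ℝ) ^ ℓ * (ℓ.factorial : ℝ) * ((ℓ:ℝ) / c) ^ k := by
              apply mul_le_mul _ h1 (by positivity) (by positivity)
              apply mul_le_mul_of_nonneg_right h2 (by positivity)
          _ = (1/c : ℝ) ^ ℓ * (1/c : ℝ) ^ k * ((ℓ.factorial : ℝ) * (ℓ:ℝ) ^ k) := by
              rw [div_pow, div_pow]
              field_simp
              rw [mul_assoc, ← mul_pow, mul_one_div_cancel hc.ne', one_pow, mul_one]
          _ ≤ (1/c : ℝ) ^ ℓ * (1/c : ℝ) ^ k * (N.factorial : ℝ) := by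
              apply mul_le_mul_of_nonneg_left h3 (by positivity)
          _ = (1/c : ℝ) ^ N * (N.factorial : ℝ) := by
              rw [← pow_add]
              congr 2
              omega
      calc ‖a ℓ r‖
          ≤ C * R ^ ℓ * (ℓ.factorial : ℝ) * r ^ (d - (ℓ:ℝ)) := ha ℓ r hr
        _ = C * (R ^ ℓ * (ℓ.factorial : ℝ) * r ^ k) * r ^ (d - (N:ℝ)) := by
            rw [hrpow]; ring
        _ ≤ C * ((1/c : ℝ) ^ N * (N.factorial : ℝ)) * r ^ (d - (N:ℝ)) := by
            apply mul_le_mul_of_nonneg_right _ hrpowpos.le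
            exact mul_le_mul_of_nonneg_left key hC.le
        _ = C * (1/c : ℝ) ^ N * (N.factorial : ℝ) * r ^ (d - (N:ℝ)) := by ring
    have hcard : ((Finset.Ico M N).card : ℝ) ≤ (2:ℝ) ^ N := by
      rw [Nat.card_Ico]
      calc ((N - M : ℕ) : ℝ) ≤ (N : ℝ) := by exact_mod_cast Nat.sub_le N M
        _ ≤ (2:ℝ) ^ N := by exact_mod_cast N.lt_two_pow_self.le
    calc ‖∑ ℓ ∈ Finset.Ico M N, a ℓ r‖
        ≤ ∑ ℓ ∈ Finset.Ico M N, ‖a ℓ r‖ := norm_sum_le _ _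
      _ ≤ ∑ _ℓ ∈ Finset.Ico M N, C * (1/c : ℝ) ^ N * (N.factorial : ℝ) * r ^ (d - (N:ℝ)) :=
          Finset.sum_le_sum hterm
      _ = ((Finset.Ico M N).card : ℝ) * (C * (1/c : ℝ) ^ N * (N.factorial : ℝ) * r ^ (d - (N:ℝ))) := by
          rw [Finset.sum_const, nsmul_eq_mul]
      _ ≤ (2:ℝ) ^ N * (C * (1/c : ℝ) ^ N * (N.factorial : ℝ) * r ^ (d - (N:ℝ))) := by
          apply mul_le_mul_of_nonneg_right hcard (by positivity)
      _ = C * (2 / c : ℝ) ^ N * (N.factorial : ℝ) * r ^ (d - (N:ℝ)) := by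
          rw [div_pow, div_pow]
          field_simp
          ring
      _ ≤ 2 * C * R' ^ N * (N.factorial : ℝ) * r ^ (d - (N:ℝ)) := by
          gcongr <;> linarith [h2cR']
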